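/- Let λ ∈ ℝ and let K : (0,∞) → ℝ be continuous and locally square-integrable. Suppose that for all 0 < t < T one has ∫₀ᵀ e^{−λ(T−s)} K(s)² ds = e^{−2λ(T−t)} ∫₀ᵗ e^{−λ(t−s)} K(s)² ds + ∫₀^{T−t} e^{−λ(T−s)} K(s)² ds. Then there exists c ∈ ℝ such that K(t) = c e^{−λt} for all t > 0. -/

import Mathlib

open MeasureTheory Set Filter intervalIntegral

/-- Deterministic core of the theorem on the driftless Volterra square-root
process: the second-moment identity forced by the time-homogeneous Markov
property implies that the kernel is exponential. -/
theorem stmt_5 (lam : ℝ) (K : ℝ → ℝ)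
    (hKc : ContinuousOn K (Set.Ioi 0))
    (hKL2 : ∀ T > 0, MeasureTheory.IntegrableOn (fun s => (K s) ^ 2) (Set.Ioc 0 T))
    (hfun : ∀ t T : ℝ, 0 < t → t < T →
      (∫ s in (0:ℝ)..T, Real.exp (-lam * (T - s)) * (K s) ^ 2)
        = Real.exp (-2 * lam * (T - t)) *
            (∫ s in (0:ℝ)..t, Real.exp (-lam * (t - s)) * (K s) ^ 2)
          + ∫ s in (0:ℝ)..(T - t), Real.exp (-lam * (T - s)) * (K s) ^ 2) :
    ∃ c : ℝ, ∀ t > 0, K t = c * Real.exp (-lam * t) := by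
  set g : ℝ → ℝ := fun s => Real.exp (lam * s) * (K s) ^ 2 with hgdef
  set h : ℝ → ℝ := fun x => ∫ s in (0:ℝ)..x, g s with hhdef
  -- rewrite integrals in terms of g
  have key : ∀ A b : ℝ, (∫ s in (0:ℝ)..b, Real.exp (-lam * (A - s)) * (K s) ^ 2)
      = Real.exp (-lam * A) * h b := by
    intro A b
    rw [hhdef, ← intervalIntegral.integral_const_mul]
    apply intervalIntegral.integral_congr
    intro s _
    show Real.exp (-lam * (A - s)) * (K s) ^ 2
        = Real.exp (-lam * A) * (Real.exp (lam * s) * (K s) ^ 2)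
    rw [← mul_assoc, ← Real.exp_add]
    congr 2
    ring
  -- the functional equation in terms of h
  have hJ : ∀ t T : ℝ, 0 < t → t < T →
      h T - h (T - t) = Real.exp (-lam * (T - t)) * h t := by
    intro t T ht htT
    have e1 := hfun t T ht htT
    rw [key T T, key t t, key T (T - t)] at e1
    have hid : Real.exp (-2 * lam * (T - t)) * Real.exp (-lam * t)
        = Real.exp (-lam * T) * Real.exp (-lam * (T - t)) := by
      rw [← Real.exp_add, ← Real.exp_add]; congr 1; ring
    have e2 : Real.exp (-lam * T) * (h T - h (T - t))
        = Real.exp (-lam * T) * (Real.exp (-lam * (T - t)) * h t) := by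
      linear_combination e1 + h t * hid
    exact mul_left_cancel₀ (Real.exp_ne_zero _) e2
  -- g is continuous on (0,∞)
  have hgc : ContinuousOn g (Set.Ioi 0) := by
    apply ContinuousOn.mul
    · exact (Real.continuous_exp.comp (continuous_const.mul continuous_id)).continuousOn
    · exact hKc.pow 2
  -- g is integrable on (0, T]
  have hIntOn : ∀ T : ℝ, 0 < T → IntegrableOn g (Set.Ioc 0 T) := by
    intro T hT
    have hK2 := hKL2 T hT
    apply MeasureTheory.Integrable.bdd_mul (c := Real.exp (|lam| * T)) hK2
    · exact (Real.continuous_exp.comp (continuous_const.mul continuous_id)).aestronglyMeasurable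
    · filter_upwards [ae_restrict_mem measurableSet_Ioc] with x hx
      rw [Real.norm_eq_abs, abs_of_pos (Real.exp_pos _)]
      apply Real.exp_le_exp.mpr
      calc lam * x ≤ |lam * x| := le_abs_self _
        _ = |lam| * |x| := abs_mul _ _
        _ = |lam| * x := by rw [abs_of_pos hx.1]
        _ ≤ |lam| * T := by nlinarith [abs_nonneg lam, hx.2]
  have hII : ∀ t : ℝ, 0 < t → IntervalIntegrable g MeasureTheory.volume 0 t :=
    fun t ht => (intervalIntegrable_iff_integrableOn_Ioc_of_le ht.le).mpr (hIntOn t ht)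
  -- FTC : derivative of h
  have hF : ∀ t : ℝ, 0 < t → HasDerivAt h (g t) t := by
    intro t ht
    exact intervalIntegral.integral_hasDerivAt_right (hII t ht)
      (hgc.stronglyMeasurableAtFilter isOpen_Ioi t ht)
      (hgc.continuousAt (Ioi_mem_nhds ht))
  -- differentiate the functional equation
  have hd : ∀ u t : ℝ, 0 < u → 0 < t → g (u + t) = Real.exp (-lam * u) * g t := by
    intro u t hu ht
    have d1 : HasDerivAt (fun x => h (u + x)) (g (u + t)) t := by
      have := (hF (u + t) (by positivity)).comp t ((hasDerivAt_id t).const_add u)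
      simpa [Function.comp_def] using this
    have d1' : HasDerivAt (fun x => h (u + x) - h u) (g (u + t)) t := d1.sub_const _
    have d2 : HasDerivAt (fun x => Real.exp (-lam * u) * h x)
        (Real.exp (-lam * u) * g t) t := (hF t ht).const_mul _
    have heq : (fun x => Real.exp (-lam * u) * h x) =ᶠ[nhds t]
        (fun x => h (u + x) - h u) := by
      filter_upwards [Ioi_mem_nhds ht] with x hx
      have := hJ x (u + x) hx (by linarith)
      rw [add_sub_cancel_right] at this
      linarith
    have d2' : HasDerivAt (fun x => Real.exp (-lam * u) * h x) (g (u + t)) t :=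
      d1'.congr_of_eventuallyEq heq
    exact (d2'.unique d2).symm ▸ rfl
  -- squared form
  have hsq : ∀ u t : ℝ, 0 < u → 0 < t →
      (K (u + t)) ^ 2 = Real.exp (-2 * lam * u) * (K t) ^ 2 := by
    intro u t hu ht
    have gd := hd u t hu ht
    have hE : Real.exp (-lam * u) * Real.exp (lam * t)
        = Real.exp (lam * (u + t)) * Real.exp (-2 * lam * u) := by
      rw [← Real.exp_add, ← Real.exp_add]; congr 1; ring
    have e2 : Real.exp (lam * (u + t)) * (K (u + t)) ^ 2
        = Real.exp (lam * (u + t)) * (Real.exp (-2 * lam * u) * (K t) ^ 2) := by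
      linear_combination gd + (K t) ^ 2 * hE
    exact mul_left_cancel₀ (Real.exp_ne_zero _) e2
  -- the function ψ t = K t * exp(lam t) has constant square
  have esq : ∀ x : ℝ, Real.exp x ^ 2 = Real.exp (2 * x) := by
    intro x; rw [sq, ← Real.exp_add]; congr 1; ring
  have hψ : ∀ t : ℝ, 0 < t →
      (K t * Real.exp (lam * t)) ^ 2 = (K 1 * Real.exp (lam * 1)) ^ 2 := by
    intro t ht
    -- K t ^ 2 * exp(2 lam t) = K 1 ^2 * exp (2 lam)
    have h1 := hsq t 1 ht one_pos
    have h2 := hsq 1 t one_pos ht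
    rw [add_comm] at h2
    -- h1 : K (t+1)^2 = exp(-2 lam t) K 1 ^2 ; h2 : K (t+1)^2 = exp(-2 lam) K t^2
    have heqt : Real.exp (-2 * lam * t) * (K 1) ^ 2
        = Real.exp (-2 * lam * 1) * (K t) ^ 2 := by
      rw [← h1, ← h2]
    rw [mul_pow, mul_pow, esq, esq]
    have i1 : Real.exp (-2 * lam * t) * Real.exp (2 * (lam * t)) = 1 := by
      rw [← Real.exp_add, show -2 * lam * t + 2 * (lam * t) = 0 by ring, Real.exp_zero]
    have i2 : Real.exp (-2 * lam * 1) * Real.exp (2 * (lam * 1)) = 1 := by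
      rw [← Real.exp_add, show -2 * lam * 1 + 2 * (lam * 1) = 0 by ring, Real.exp_zero]
    linear_combination (-(Real.exp (2 * (lam * t)) * Real.exp (2 * (lam * 1)))) * heqt
      + (Real.exp (2 * (lam * 1)) * (K 1) ^ 2) * i1
      + (-(Real.exp (2 * (lam * t)) * (K t) ^ 2)) * i2
  -- sign argument
  set c : ℝ := K 1 * Real.exp (lam * 1) with hcdef
  refine ⟨c, fun t ht => ?_⟩
  have hψc : K t * Real.exp (lam * t) = c := by
    have h2 := hψ t ht
    have hfac : (K t * Real.exp (lam * t) - c) * (K t * Real.exp (lam * t) + c) = 0 := by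
      rw [hcdef]; linear_combination h2
    rcases mul_eq_zero.mp hfac with hcase | hcase
    · linarith
    · -- K t * exp(lam t) = -c ; show c = 0 using IVT, else contradiction
      by_cases hc0 : c = 0
      · rw [hc0] at hcase ⊢; linarith
      · exfalso
        set ψ : ℝ → ℝ := fun x => K x * Real.exp (lam * x) with hψdef
        have hsub : Set.uIcc t 1 ⊆ Set.Ioi 0 := by
          intro x hx
          exact lt_of_lt_of_le (lt_min ht one_pos) hx.1
        have hcont : ContinuousOn ψ (Set.uIcc t 1) := by
          apply ContinuousOn.mul (hKc.mono hsub)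
          exact (Real.continuous_exp.comp (continuous_const.mul continuous_id)).continuousOn
        have hψt : ψ t = -c := by
          show K t * Real.exp (lam * t) = -c
          linarith
        have hψ1 : ψ 1 = c := rfl
        have h0mem : (0:ℝ) ∈ Set.uIcc (ψ t) (ψ 1) := by
          rw [hψt, hψ1]
          rcases le_total c 0 with hcle | hcle
          · exact Set.mem_uIcc.mpr (Or.inr ⟨hcle, by linarith⟩)
          · exact Set.mem_uIcc.mpr (Or.inl ⟨by linarith, hcle⟩)
        obtain ⟨x, hxmem, hψx⟩ := intermediate_value_uIcc hcont h0mem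
        have hxpos : 0 < x := hsub hxmem
        have := hψ x hxpos
        rw [show K x * Real.exp (lam * x) = ψ x from rfl, hψx] at this
        have hc2 : c ^ 2 = 0 := by simpa using this.symm
        exact hc0 ((pow_eq_zero_iff two_ne_zero).mp hc2)
  -- conclude
  have hexp : Real.exp (lam * t) * Real.exp (-lam * t) = 1 := by
    rw [← Real.exp_add, show lam * t + -lam * t = 0 by ring, Real.exp_zero]
  calc K t = K t * (Real.exp (lam * t) * Real.exp (-lam * t)) := by rw [hexp, mul_one]
    _ = (K t * Real.exp (lam * t)) * Real.exp (-lam * t) := by ring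
    _ = c * Real.exp (-lam * t) := by rw [hψc]
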